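/- arXiv:1705.03521 — 2 statements merged into one kernel-verified Lean document; each statement's English description precedes it below -/
import Mathlib

section
/- Integral representation of the derivative of the logarithm: for a positive definite operator g and Hermitian operator f on a finite-dimensional Hilbert space, ∫₀^∞ (g+t)^{−1} f (g+t)^{−1} dt = ∫_{−∞}^{∞} β₀(t) · g^{(−1−it)/2} f g^{(−1+it)/2} dt, where β₀(t) = (π/2)(cosh(πt)+1)^{−1}. -/
open Matrix Kronecker MeasureTheory
open scoped BigOperators ComplexOrder

attribute [local instance] Matrix.frobeniusNormedAddCommGroup Matrix.frobeniusNormedSpace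

variable {n : Type*} [Fintype n] [DecidableEq n]

/-- Functional calculus for Hermitian matrices (with real functions). -/
noncomputable def funcCalc (f : ℝ → ℂ) (M : Matrix n n ℂ) : Matrix n n ℂ :=
  if h : M.IsHermitian then
    (h.eigenvectorUnitary : Matrix n n ℂ) * Matrix.diagonal (fun i => f (h.eigenvalues i)) *
      (star h.eigenvectorUnitary : Matrix n n ℂ)
  else 0

/-- Matrix logarithm of a Hermitian matrix. -/
noncomputable def mlog (M : Matrix n n ℂ) : Matrix n n ℂ :=
  funcCalc (fun x => (Real.log x : ℂ)) M

/-- Matrix exponential of a Hermitian matrix. -/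
noncomputable def mexp (M : Matrix n n ℂ) : Matrix n n ℂ :=
  funcCalc (fun x => (Real.exp x : ℂ)) M

/-- Inverse square root `M^{-1/2}` of a positive definite matrix. -/
noncomputable def invSqrt (M : Matrix n n ℂ) : Matrix n n ℂ :=
  funcCalc (fun x => ((x ^ (-(1/2) : ℝ) : ℝ) : ℂ)) M

/-- Complex power `M^z` of a Hermitian (positive definite) matrix. -/
noncomputable def cpow (M : Matrix n n ℂ) (z : ℂ) : Matrix n n ℂ :=
  if h : M.IsHermitian then
    (h.eigenvectorUnitary : Matrix n n ℂ) *
      Matrix.diagonal (fun i => (h.eigenvalues i : ℂ) ^ z) *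
      (star h.eigenvectorUnitary : Matrix n n ℂ)
  else 0

/-- Quantum relative entropy `D(ρ‖σ) = Tr[ρ(log ρ - log σ)]` of density matrices. -/
noncomputable def relEnt (ρ σ : Matrix n n ℂ) : ℝ :=
  ((ρ * (mlog ρ - mlog σ)).trace).re

/-- Normalized relative entropy for not-necessarily-normalized positive operators. -/
noncomputable def relEntGen (f g : Matrix n n ℂ) : ℝ :=
  ((f.trace).re)⁻¹ * ((f * (mlog f - mlog g)).trace).re

/-- A density operator: positive semidefinite with unit trace. -/
def IsDensity (M : Matrix n n ℂ) : Prop := M.PosSemidef ∧ M.trace = 1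

/-- Support inclusion `supp ρ ⊆ supp σ`, phrased as kernel inclusion. -/
def SuppLE (ρ σ : Matrix n n ℂ) : Prop := ∀ v, σ *ᵥ v = 0 → ρ *ᵥ v = 0

/-- Trace norm `‖X‖₁ = Tr √(XᴴX)`. -/
noncomputable def trNorm (X : Matrix n n ℂ) : ℝ :=
  ((((Matrix.posSemidef_conjTranspose_mul_self X).1.eigenvectorUnitary : Matrix n n ℂ) *
      Matrix.diagonal (fun i => ((Real.sqrt ((Matrix.posSemidef_conjTranspose_mul_self X).1.eigenvalues i) : ℝ) : ℂ)) *
      (star (Matrix.posSemidef_conjTranspose_mul_self X).1.eigenvectorUnitary : Matrix n n ℂ)).trace).re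

/-- Operator norm `‖M‖∞`. -/
noncomputable def opNorm (M : Matrix n n ℂ) : ℝ :=
  ‖(Matrix.toEuclideanCLM (𝕜 := ℂ) M : EuclideanSpace ℂ n →L[ℂ] EuclideanSpace ℂ n)‖

/-- The superoperator `T_g(f) = ∫₀^∞ (g+t)⁻¹ f (g+t)⁻¹ dt`. -/
noncomputable def Tcal (g f : Matrix n n ℂ) : Matrix n n ℂ :=
  ∫ t in Set.Ioi (0 : ℝ), (g + (t : ℂ) • 1)⁻¹ * f * (g + (t : ℂ) • 1)⁻¹

/-- The probability density `β₀(t) = (π/2)(cosh(π t) + 1)⁻¹`. -/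
noncomputable def beta0 (t : ℝ) : ℝ := (Real.pi / 2) * (Real.cosh (Real.pi * t) + 1)⁻¹

variable {A B : Type*} [Fintype A] [DecidableEq A] [Fintype B] [DecidableEq B]

/-- Partial trace over `B`. -/
noncomputable def ptraceB (M : Matrix (A × B) (A × B) ℂ) : Matrix A A ℂ :=
  Matrix.of fun a a' => ∑ b, M (a, b) (a', b)

/-- Partial trace over `A`. -/
noncomputable def ptraceA (M : Matrix (A × B) (A × B) ℂ) : Matrix B B ℂ :=
  Matrix.of fun b b' => ∑ a, M (a, b) (a, b')



section Aux
open Complex Set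

lemma hderiv_aux {a b : ℝ} (ha : 0 < a) (hb : 0 < b) (hab : a ≠ b) {x : ℝ} (hx : x ∈ Ici (0:ℝ)) :
    HasDerivAt (fun t => (Real.log (a+t) - Real.log (b+t))/(b-a)) (((a+x)*(b+x))⁻¹) x := by
  have hax : 0 < a + x := by have := hx; simp at this; linarith
  have hbx : 0 < b + x := by have := hx; simp at this; linarith
  have h1 : HasDerivAt (fun t => Real.log (a+t)) ((a+x)⁻¹) x := by
    have := ((hasDerivAt_id x).const_add a).log (ne_of_gt hax)
    simpa using this
  have h2 : HasDerivAt (fun t => Real.log (b+t)) ((b+x)⁻¹) x := by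
    have := ((hasDerivAt_id x).const_add b).log (ne_of_gt hbx)
    simpa using this
  have h3 := (h1.sub h2).div_const (b-a)
  refine h3.congr_deriv ?_; symm
  have hba : b - a ≠ 0 := sub_ne_zero.mpr (Ne.symm hab)
  rw [eq_div_iff hba, inv_sub_inv (ne_of_gt hax) (ne_of_gt hbx)]
  field_simp
  ring

lemma tendsto_aux {a b : ℝ} (ha : 0 < a) (hb : 0 < b) :
    Filter.Tendsto (fun t => (Real.log (a+t) - Real.log (b+t))/(b-a)) Filter.atTop (nhds 0) := by
  have h0 : Filter.Tendsto (fun t : ℝ => (a+t)/(b+t)) Filter.atTop (nhds 1) := by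
    have h1 : Filter.Tendsto (fun t : ℝ => (a-b)/(b+t) + 1) Filter.atTop (nhds (0+1)) := by
      apply Filter.Tendsto.add_const
      apply Filter.Tendsto.div_atTop tendsto_const_nhds
      exact Filter.tendsto_atTop_add_const_left _ b Filter.tendsto_id
    rw [zero_add] at h1
    apply h1.congr'
    filter_upwards [Filter.eventually_gt_atTop (0:ℝ)] with t ht
    have hbt : b + t ≠ 0 := by positivity
    field_simp
    ring
  have hlog : Filter.Tendsto (fun t : ℝ => Real.log ((a+t)/(b+t))) Filter.atTop (nhds 0) := by
    have := (Real.continuousAt_log (by norm_num : (1:ℝ) ≠ 0)).tendsto.comp h0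
    simpa [Function.comp_def] using this
  have : Filter.Tendsto (fun t : ℝ => Real.log (a+t) - Real.log (b+t)) Filter.atTop (nhds 0) := by
    apply hlog.congr'
    filter_upwards [Filter.eventually_gt_atTop (0:ℝ)] with t ht
    rw [Real.log_div (by positivity) (by positivity)]
  simpa using this.div_const (b-a)

lemma Leval_ne {a b : ℝ} (ha : 0 < a) (hb : 0 < b) (hab : a ≠ b) :
    ∫ t in Ioi (0:ℝ), ((a+t)*(b+t))⁻¹ = (Real.log b - Real.log a)/(b-a) := by
  have := integral_Ioi_of_hasDerivAt_of_nonneg' (g := fun t => (Real.log (a+t) - Real.log (b+t))/(b-a))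
    (fun x hx => hderiv_aux ha hb hab hx)
    (fun x hx => by have : (0:ℝ) < x := hx; positivity)
    (tendsto_aux ha hb)
  rw [this]
  simp only [add_zero]
  rw [zero_sub, ← neg_div, neg_sub]

lemma Lint_ne {a b : ℝ} (ha : 0 < a) (hb : 0 < b) (hab : a ≠ b) :
    IntegrableOn (fun t => ((a+t)*(b+t))⁻¹) (Ioi (0:ℝ)) := by
  exact integrableOn_Ioi_deriv_of_nonneg' (fun x hx => hderiv_aux ha hb hab hx)
    (fun x hx => by have : (0:ℝ) < x := hx; positivity) (tendsto_aux ha hb)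

lemma hderiv_aux2 {a : ℝ} (ha : 0 < a) {x : ℝ} (hx : x ∈ Ici (0:ℝ)) :
    HasDerivAt (fun t => -(a+t)⁻¹) (((a+x)*(a+x))⁻¹) x := by
  have hax : 0 < a + x := by have := hx; simp at this; linarith
  have h1 : HasDerivAt (fun t : ℝ => a + t) 1 x := (hasDerivAt_id x).const_add a
  have h2 := (h1.inv (ne_of_gt hax)).neg
  refine h2.congr_deriv ?_; symm
  rw [mul_inv]
  field_simp

lemma tendsto_aux2 {a : ℝ} (ha : 0 < a) :
    Filter.Tendsto (fun t : ℝ => -(a+t)⁻¹) Filter.atTop (nhds 0) := by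
  have h1 : Filter.Tendsto (fun t : ℝ => a + t) Filter.atTop Filter.atTop :=
    Filter.tendsto_atTop_add_const_left _ a Filter.tendsto_id
  have := (tendsto_inv_atTop_zero.comp h1).neg
  simpa using this

lemma Leval_eq' {a : ℝ} (ha : 0 < a) :
    ∫ t in Ioi (0:ℝ), ((a+t)*(a+t))⁻¹ = a⁻¹ := by
  have := integral_Ioi_of_hasDerivAt_of_nonneg' (g := fun t : ℝ => -(a+t)⁻¹)
    (fun x hx => hderiv_aux2 ha hx)
    (fun x hx => by have : (0:ℝ) < x := hx; positivity)
    (tendsto_aux2 ha)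
  rw [this]
  simp

lemma Lint_eq' {a : ℝ} (ha : 0 < a) :
    IntegrableOn (fun t => ((a+t)*(a+t))⁻¹) (Ioi (0:ℝ)) :=
  integrableOn_Ioi_deriv_of_nonneg' (fun x hx => hderiv_aux2 ha hx)
    (fun x hx => by have : (0:ℝ) < x := hx; positivity) (tendsto_aux2 ha)


lemma beta0_eq (t : ℝ) : beta0 t =
    Real.pi * Real.exp (Real.pi * t) / (1 + Real.exp (Real.pi * t))^2 := by
  unfold beta0
  have h1 : Real.cosh (Real.pi * t) = (Real.exp (Real.pi*t) + (Real.exp (Real.pi*t))⁻¹)/2 := by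
    rw [Real.cosh_eq, Real.exp_neg]
  rw [h1]
  have he : (0:ℝ) < Real.exp (Real.pi * t) := Real.exp_pos _
  field_simp
  ring

lemma beta0_pos (t : ℝ) : 0 < beta0 t := by
  rw [beta0_eq]
  positivity

/-- the logistic map -/
noncomputable def lgs (t : ℝ) : ℝ := Real.exp (Real.pi * t) / (1 + Real.exp (Real.pi * t))

lemma lgs_mem (t : ℝ) : lgs t ∈ Ioo (0:ℝ) 1 := by
  unfold lgs
  have he : (0:ℝ) < Real.exp (Real.pi * t) := Real.exp_pos _
  constructor
  · positivity
  · rw [div_lt_one (by positivity)]; linarith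

lemma lgs_hasDerivAt (t : ℝ) : HasDerivAt lgs (beta0 t) t := by
  have h1 : HasDerivAt (fun s : ℝ => Real.exp (Real.pi * s)) (Real.pi * Real.exp (Real.pi * t)) t := by
    have := (((hasDerivAt_id t).const_mul Real.pi).exp)
    simpa [mul_comm] using this
  have h2 : HasDerivAt (fun s : ℝ => 1 + Real.exp (Real.pi * s)) (Real.pi * Real.exp (Real.pi * t)) t :=
    h1.const_add 1
  have he : (0:ℝ) < Real.exp (Real.pi * t) := Real.exp_pos _
  have h3 := h1.div h2 (by positivity)
  refine h3.congr_deriv ?_; symm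
  rw [beta0_eq]
  field_simp
  ring

lemma lgs_image : lgs '' univ = Ioo (0:ℝ) 1 := by
  apply Subset.antisymm
  · rintro y ⟨t, -, rfl⟩; exact lgs_mem t
  · rintro y ⟨hy0, hy1⟩
    refine ⟨Real.log (y/(1-y)) / Real.pi, trivial, ?_⟩
    have hpi : Real.pi ≠ 0 := Real.pi_ne_zero
    have h1y : (0:ℝ) < 1 - y := by linarith
    have : Real.exp (Real.pi * (Real.log (y/(1-y)) / Real.pi)) = y/(1-y) := by
      rw [mul_div_cancel₀ _ hpi, Real.exp_log (by positivity)]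
    unfold lgs
    rw [this]
    field_simp
    ring

lemma lgs_injOn : InjOn lgs univ := by
  intro s _ t _ h
  unfold lgs at h
  have hs : (0:ℝ) < Real.exp (Real.pi * s) := Real.exp_pos _
  have ht : (0:ℝ) < Real.exp (Real.pi * t) := Real.exp_pos _
  have h2 : Real.exp (Real.pi * s) = Real.exp (Real.pi * t) := by
    field_simp at h
    nlinarith [h]
  have := Real.exp_injective h2
  have hpi : Real.pi ≠ 0 := Real.pi_ne_zero
  field_simp at this
  tauto

noncomputable def gfun (c : ℝ) (x : ℝ) : ℂ := (x:ℂ)^(I*(c:ℂ)) * ((((1:ℝ)-x : ℝ)):ℂ)^(-(I*(c:ℂ)))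

lemma ofReal_cpow_pos {x : ℝ} (hx : 0 < x) (w : ℂ) :
    (x:ℂ)^w = Complex.exp (w * (Real.log x : ℂ)) := by
  rw [Complex.cpow_def_of_ne_zero (by exact_mod_cast ne_of_gt hx), Complex.ofReal_log hx.le,
    mul_comm]

lemma gfun_lgs (c t : ℝ) : gfun c (lgs t) = Complex.exp (I*(c:ℂ)*(Real.pi*t : ℝ)) := by
  have hu : (0:ℝ) < Real.exp (Real.pi * t) := Real.exp_pos _
  have h0 : 0 < lgs t := (lgs_mem t).1
  have h1 : 0 < 1 - lgs t := by have := (lgs_mem t).2; linarith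
  unfold gfun
  rw [ofReal_cpow_pos h0, ofReal_cpow_pos h1, ← Complex.exp_add]
  have hlog : Real.log (lgs t) - Real.log (1 - lgs t) = Real.pi * t := by
    have he1 : (1:ℝ) - lgs t = 1 / (1 + Real.exp (Real.pi * t)) := by
      unfold lgs; field_simp; ring
    have he0 : lgs t = Real.exp (Real.pi * t) / (1 + Real.exp (Real.pi * t)) := rfl
    rw [he1, he0, Real.log_div (by positivity) (by positivity),
      Real.log_div (by positivity) (by positivity), Real.log_exp, Real.log_one]
    ring
  have : I*(c:ℂ) * (Real.log (lgs t) : ℂ) + -(I*(c:ℂ)) * (Real.log (1 - lgs t) : ℂ)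
      = I*(c:ℂ)*((Real.log (lgs t) - Real.log (1 - lgs t) : ℝ) : ℂ) := by
    push_cast; ring
  rw [this, hlog]

lemma integrand_eq (c t : ℝ) :
    |beta0 t| • gfun c (lgs t) = (beta0 t : ℂ) * Complex.exp (I*(c:ℂ)*(Real.pi*t : ℝ)) := by
  rw [abs_of_pos (beta0_pos t), gfun_lgs, Complex.real_smul]

lemma gfun_contOn (c : ℝ) : ContinuousOn (gfun c) (Ioo (0:ℝ) 1) := by
  intro x hx
  apply ContinuousAt.continuousWithinAt
  have h1 : ContinuousAt (fun x : ℝ => (x:ℂ)^(I*(c:ℂ))) x := by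
    apply (continuousAt_cpow_const ?_).comp Complex.continuous_ofReal.continuousAt
    exact Complex.mem_slitPlane_iff.mpr (Or.inl (by simpa using hx.1))
  have h2 : ContinuousAt (fun x : ℝ => ((((1:ℝ)-x : ℝ)):ℂ)^(-(I*(c:ℂ)))) x := by
    apply (continuousAt_cpow_const ?_).comp
      (Complex.continuous_ofReal.comp (continuous_const.sub continuous_id)).continuousAt
    exact Complex.mem_slitPlane_iff.mpr (Or.inl (by simp [hx.2]))
  exact h1.mul h2

lemma gfun_norm {c x : ℝ} (hx : x ∈ Ioo (0:ℝ) 1) : ‖gfun c x‖ = 1 := by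
  have h0 : (0:ℝ) < x := hx.1
  have h1 : (0:ℝ) < 1 - x := by have := hx.2; linarith
  unfold gfun
  rw [norm_mul,
    Complex.norm_cpow_eq_rpow_re_of_pos h0, Complex.norm_cpow_eq_rpow_re_of_pos h1]
  simp

lemma gfun_integrableOn (c : ℝ) : IntegrableOn (gfun c) (Ioo (0:ℝ) 1) := by
  apply Integrable.mono' (g := fun _ => (1:ℝ))
    (integrableOn_const measure_Ioo_lt_top.ne)
    ((gfun_contOn c).aestronglyMeasurable measurableSet_Ioo)
  filter_upwards [ae_restrict_mem measurableSet_Ioo] with x hx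
  rw [gfun_norm hx]

lemma Phi_integrable (c : ℝ) :
    Integrable (fun t => (beta0 t : ℂ) * Complex.exp (I*(c:ℂ)*(Real.pi*t : ℝ))) := by
  have hder : ∀ t ∈ (univ : Set ℝ), HasDerivWithinAt lgs (beta0 t) univ t :=
    fun t _ => (lgs_hasDerivAt t).hasDerivWithinAt
  have h := (integrableOn_image_iff_integrableOn_abs_deriv_smul MeasurableSet.univ hder
    lgs_injOn (gfun c)).mp
  rw [lgs_image] at h
  have h2 := h (gfun_integrableOn c)
  rw [integrableOn_univ] at h2
  exact h2.congr (Filter.EventuallyEq.of_eq (funext fun t => integrand_eq c t))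

lemma Phi_eval (c : ℝ) :
    ∫ t : ℝ, (beta0 t : ℂ) * Complex.exp (I*(c:ℂ)*(Real.pi*t : ℝ))
      = Complex.Gamma (1+I*c) * Complex.Gamma (1-I*c) := by
  have hder : ∀ t ∈ (univ : Set ℝ), HasDerivWithinAt lgs (beta0 t) univ t :=
    fun t _ => (lgs_hasDerivAt t).hasDerivWithinAt
  have hjac := integral_image_eq_integral_abs_deriv_smul MeasurableSet.univ hder lgs_injOn (gfun c)
  rw [lgs_image, setIntegral_univ] at hjac
  have hrhs : ∫ t : ℝ, |beta0 t| • gfun c (lgs t)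
      = ∫ t : ℝ, (beta0 t : ℂ) * Complex.exp (I*(c:ℂ)*(Real.pi*t : ℝ)) := by
    congr 1; funext t; exact integrand_eq c t
  rw [hrhs] at hjac
  rw [← hjac]
  -- now relate ∫ over Ioo to betaIntegral
  have hre1 : 0 < Complex.re (1+I*(c:ℂ)) := by simp
  have hre2 : 0 < Complex.re (1-I*(c:ℂ)) := by simp
  have hBeta := Complex.Gamma_mul_Gamma_eq_betaIntegral hre1 hre2
  have hsum : (1+I*(c:ℂ)) + (1-I*(c:ℂ)) = 2 := by ring
  have hG2 : Complex.Gamma 2 = 1 := by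
    have : (2:ℂ) = 1 + 1 := by norm_num
    rw [this, Complex.Gamma_add_one 1 one_ne_zero, Complex.Gamma_one, mul_one]
  rw [hsum, hG2, one_mul] at hBeta
  rw [hBeta]
  unfold Complex.betaIntegral
  rw [intervalIntegral.integral_of_le zero_le_one, ← integral_Ioc_eq_integral_Ioo]
  congr 1
  funext x
  unfold gfun
  have he1 : (1:ℂ)+I*(c:ℂ)-1 = I*(c:ℂ) := by ring
  have he2 : (1:ℂ)-I*(c:ℂ)-1 = -(I*(c:ℂ)) := by ring
  rw [he1, he2]
  norm_cast

lemma GG_ne {c : ℝ} (hc : c ≠ 0) : Complex.Gamma (1+I*c) * Complex.Gamma (1-I*c)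
    = (((Real.pi*c)/Real.sinh (Real.pi*c) : ℝ) : ℂ) := by
  have hIc : I*(c:ℂ) ≠ 0 := by
    simp [Complex.I_ne_zero, hc]
  have h1 : (1:ℂ)+I*c = I*c + 1 := by ring
  rw [h1, Complex.Gamma_add_one _ hIc, mul_assoc, Complex.Gamma_mul_Gamma_one_sub]
  have h2 : (Real.pi:ℂ) * (I*c) = ((Real.pi*c : ℝ):ℂ) * I := by push_cast; ring
  rw [h2, Complex.sin_mul_I, ← Complex.ofReal_sinh]
  have hs : Real.sinh (Real.pi*c) ≠ 0 := Real.sinh_ne_zero.mpr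
    (mul_ne_zero Real.pi_ne_zero hc)
  have hsC : ((Real.sinh (Real.pi*c) : ℝ):ℂ) ≠ 0 := by exact_mod_cast hs
  have hsC' : Complex.sinh ((Real.pi:ℂ) * (c:ℂ)) ≠ 0 := by
    rw [show ((Real.pi:ℂ)*(c:ℂ)) = ((Real.pi*c:ℝ):ℂ) by push_cast; ring, ← Complex.ofReal_sinh]
    exact_mod_cast hs
  field_simp [Complex.I_ne_zero]
  rw [Complex.ofReal_div, Complex.ofReal_mul, mul_div_cancel₀ _ hsC, mul_comm]

lemma GG_zero : Complex.Gamma (1+I*(0:ℝ)) * Complex.Gamma (1-I*(0:ℝ)) = 1 := by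
  simp [Complex.Gamma_one]

lemma real_final {a b : ℝ} (ha : 0 < a) (hb : 0 < b) (hab : a ≠ b) :
    Real.exp (-(Real.log a + Real.log b)/2) *
      ((Real.pi*((Real.log b - Real.log a)/(2*Real.pi)))/Real.sinh
        (Real.pi*((Real.log b - Real.log a)/(2*Real.pi))))
    = (Real.log b - Real.log a)/(b-a) := by
  have hpi : Real.pi ≠ 0 := Real.pi_ne_zero
  have hxi : Real.pi*((Real.log b - Real.log a)/(2*Real.pi)) = (Real.log b - Real.log a)/2 := by
    field_simp
  rw [hxi]
  set p := Real.exp (Real.log a / 2) with hp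
  set q := Real.exp (Real.log b / 2) with hq
  have hp0 : 0 < p := Real.exp_pos _
  have hq0 : 0 < q := Real.exp_pos _
  have hpa : p * p = a := by
    rw [hp, ← Real.exp_add]
    rw [show Real.log a / 2 + Real.log a / 2 = Real.log a by ring, Real.exp_log ha]
  have hqb : q * q = b := by
    rw [hq, ← Real.exp_add]
    rw [show Real.log b / 2 + Real.log b / 2 = Real.log b by ring, Real.exp_log hb]
  have hs : Real.exp (-(Real.log a + Real.log b)/2) = (p*q)⁻¹ := by
    rw [show -(Real.log a + Real.log b)/2 = -(Real.log a/2 + Real.log b/2) by ring,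
      Real.exp_neg, Real.exp_add]
  have hsinh : Real.sinh ((Real.log b - Real.log a)/2) = (b-a)/(2*(p*q)) := by
    rw [Real.sinh_eq]
    rw [show (Real.log b - Real.log a)/2 = Real.log b/2 - Real.log a/2 by ring,
      Real.exp_sub, neg_sub, Real.exp_sub, ← hq, ← hp,
      div_sub_div _ _ (ne_of_gt hp0) (ne_of_gt hq0), hpa, hqb]
    ring
  have hba : b - a ≠ 0 := sub_ne_zero.mpr (Ne.symm hab)
  rw [hs, hsinh]
  field_simp

lemma cpow_pair {a b : ℝ} (ha : 0 < a) (hb : 0 < b) (t : ℝ) :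
    (a:ℂ)^(((-1:ℂ) - t*I)/2) * (b:ℂ)^(((-1:ℂ) + t*I)/2)
    = (Real.exp (-(Real.log a + Real.log b)/2) : ℂ) *
      Complex.exp (I*(((Real.log b - Real.log a)/(2*Real.pi) : ℝ):ℂ)*((Real.pi*t : ℝ):ℂ)) := by
  rw [ofReal_cpow_pos ha, ofReal_cpow_pos hb, ← Complex.exp_add, Complex.ofReal_exp,
    ← Complex.exp_add]
  congr 1
  have hpi : (Real.pi : ℂ) ≠ 0 := by exact_mod_cast Real.pi_ne_zero
  push_cast
  field_simp
  ring

lemma entry_key {a b : ℝ} (ha : 0 < a) (hb : 0 < b) :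
    (∫ t in Ioi (0:ℝ), ((a:ℂ)+t)⁻¹ * ((b:ℂ)+t)⁻¹) =
    ∫ t : ℝ, (beta0 t : ℂ) * ((a:ℂ)^(((-1:ℂ) - t*I)/2) * (b:ℂ)^(((-1:ℂ) + t*I)/2)) := by
  set c : ℝ := (Real.log b - Real.log a)/(2*Real.pi) with hc
  set s : ℝ := Real.exp (-(Real.log a + Real.log b)/2) with hsdef
  have hrhs : (∫ t : ℝ, (beta0 t : ℂ) * ((a:ℂ)^(((-1:ℂ) - t*I)/2) * (b:ℂ)^(((-1:ℂ) + t*I)/2)))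
      = (s:ℂ) * ∫ t : ℝ, (beta0 t : ℂ) * Complex.exp (I*(c:ℂ)*((Real.pi*t : ℝ):ℂ)) := by
    rw [← integral_const_mul]
    congr 1
    funext t
    rw [cpow_pair ha hb t]
    ring
  have hlhs0 : (∫ t in Ioi (0:ℝ), ((a:ℂ)+t)⁻¹ * ((b:ℂ)+t)⁻¹)
      = ∫ t in Ioi (0:ℝ), (((((a+t)*(b+t))⁻¹ : ℝ)) : ℂ) := by
    apply setIntegral_congr_fun measurableSet_Ioi
    intro t ht
    push_cast [mul_inv]
    ring
  have hlhs : (∫ t in Ioi (0:ℝ), ((a:ℂ)+t)⁻¹ * ((b:ℂ)+t)⁻¹)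
      = ((∫ t in Ioi (0:ℝ), ((a+t)*(b+t))⁻¹ : ℝ) : ℂ) := by
    rw [hlhs0]; exact integral_ofReal
  rw [hlhs, hrhs, Phi_eval]
  by_cases hab : a = b
  · subst hab
    have hc0 : c = 0 := by rw [hc]; simp
    rw [hc0, Leval_eq' ha]
    push_cast
    simp only [mul_zero, zero_mul, Complex.ofReal_zero, add_zero, sub_zero,
      Complex.Gamma_one, one_mul, mul_one]
    rw [hsdef, show -(Real.log a + Real.log a)/2 = -Real.log a by ring, Real.exp_neg,
      Real.exp_log ha]
    push_cast
    ring
  · have hcne : c ≠ 0 := by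
      rw [hc]
      have : Real.log a ≠ Real.log b := fun h => hab (by
        rw [← Real.exp_log ha, ← Real.exp_log hb, h])
      intro h
      apply this
      have hpi : (2:ℝ)*Real.pi ≠ 0 := by positivity
      field_simp at h
      linarith
    rw [Leval_ne ha hb hab, GG_ne hcne, ← Complex.ofReal_mul]
    norm_cast
    rw [hsdef, hc]
    exact (real_final ha hb hab).symm

lemma entry_int_right {a b : ℝ} (ha : 0 < a) (hb : 0 < b) :
    Integrable (fun t : ℝ => (beta0 t : ℂ) *
      ((a:ℂ)^(((-1:ℂ) - t*I)/2) * (b:ℂ)^(((-1:ℂ) + t*I)/2))) := by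
  set c : ℝ := (Real.log b - Real.log a)/(2*Real.pi) with hc
  set s : ℝ := Real.exp (-(Real.log a + Real.log b)/2) with hsdef
  have := (Phi_integrable c).const_mul (s:ℂ)
  apply this.congr
  apply Filter.EventuallyEq.of_eq
  funext t
  rw [cpow_pair ha hb t]
  ring

lemma entry_int_left {a b : ℝ} (ha : 0 < a) (hb : 0 < b) :
    IntegrableOn (fun t : ℝ => ((a:ℂ)+t)⁻¹ * ((b:ℂ)+t)⁻¹) (Ioi (0:ℝ)) := by
  have hre : IntegrableOn (fun t : ℝ => (((a+t)*(b+t))⁻¹ : ℝ)) (Ioi (0:ℝ)) := by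
    by_cases hab : a = b
    · subst hab; exact Lint_eq' ha
    · exact Lint_ne ha hb hab
  apply IntegrableOn.congr_fun (hre.ofReal (𝕜 := ℂ)) _ measurableSet_Ioi
  intro t ht
  push_cast [mul_inv]
  norm_num

lemma conj_decomp (U V : Matrix n n ℂ) (M : Matrix n n ℂ) :
    U * M * V = ∑ p : n × n, M p.1 p.2 • (U * Matrix.single p.1 p.2 1 * V) := by
  conv_lhs => rw [Matrix.matrix_eq_sum_single M]
  rw [← Finset.sum_product', Finset.mul_sum, Finset.sum_mul]
  apply Finset.sum_congr rfl
  intro p _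
  rw [show Matrix.single p.1 p.2 (M p.1 p.2)
      = M p.1 p.2 • Matrix.single p.1 p.2 1 by
    rw [Matrix.smul_single, smul_eq_mul, mul_one]]
  rw [Matrix.mul_smul, Matrix.smul_mul]

lemma integral_conj_mat {μ : Measure ℝ} (U V : Matrix n n ℂ) (c : n → n → ℝ → ℂ)
    (hint : ∀ i j, Integrable (c i j) μ) :
    (∫ t, U * (Matrix.of fun i j => c i j t) * V ∂μ)
      = U * (Matrix.of fun i j => ∫ t, c i j t ∂μ) * V := by
  have h1 : (∫ t, U * (Matrix.of fun i j => c i j t) * V ∂μ)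
      = ∫ t, ∑ p : n × n, c p.1 p.2 t • (U * Matrix.single p.1 p.2 1 * V) ∂μ := by
    congr 1
    funext t
    rw [conj_decomp]
    rfl
  rw [h1, integral_finset_sum _ (fun p _ => ((hint p.1 p.2).smul_const _)), conj_decomp]
  apply Finset.sum_congr rfl
  intro p _
  rw [integral_smul_const]
  rfl

section spectral
variable {g : Matrix n n ℂ} (hg : g.PosDef)

lemma hU1 : (hg.1.eigenvectorUnitary : Matrix n n ℂ) * star (hg.1.eigenvectorUnitary : Matrix n n ℂ) = 1 :=
  Matrix.mem_unitaryGroup_iff.mp (hg.1.eigenvectorUnitary).2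

lemma hU2 : star (hg.1.eigenvectorUnitary : Matrix n n ℂ) * (hg.1.eigenvectorUnitary : Matrix n n ℂ) = 1 :=
  Matrix.mem_unitaryGroup_iff'.mp (hg.1.eigenvectorUnitary).2

lemma hspec : g = (hg.1.eigenvectorUnitary : Matrix n n ℂ) *
    Matrix.diagonal (fun i => (hg.1.eigenvalues i : ℂ)) *
    star (hg.1.eigenvectorUnitary : Matrix n n ℂ) := by
  convert hg.1.spectral_theorem using 3
  rfl

lemma shift_decomp {t : ℝ} :
    g + (t:ℂ) • 1 = (hg.1.eigenvectorUnitary : Matrix n n ℂ) *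
      Matrix.diagonal (fun i => ((hg.1.eigenvalues i : ℂ) + t)) *
      star (hg.1.eigenvectorUnitary : Matrix n n ℂ) := by
  set U := (hg.1.eigenvectorUnitary : Matrix n n ℂ)
  have h1 : (t:ℂ) • (1 : Matrix n n ℂ) = U * ((t:ℂ) • 1) * star U := by
    rw [Matrix.mul_smul, Matrix.smul_mul, mul_one, hU1 hg]
  conv_lhs => rw [hspec hg, h1]
  rw [← Matrix.add_mul, ← Matrix.mul_add, Matrix.smul_one_eq_diagonal, Matrix.diagonal_add]

lemma resolvent_decomp {t : ℝ} (ht : 0 < t) :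
    (g + (t:ℂ) • 1)⁻¹ = (hg.1.eigenvectorUnitary : Matrix n n ℂ) *
      Matrix.diagonal (fun i => ((hg.1.eigenvalues i : ℂ) + t)⁻¹) *
      star (hg.1.eigenvectorUnitary : Matrix n n ℂ) := by
  set U := (hg.1.eigenvectorUnitary : Matrix n n ℂ) with hU
  apply Matrix.inv_eq_right_inv
  rw [shift_decomp hg]
  have hne : ∀ i, (hg.1.eigenvalues i : ℂ) + t ≠ 0 := by
    intro i
    have h := hg.eigenvalues_pos i
    have : (0:ℝ) < hg.1.eigenvalues i + t := by linarith
    exact_mod_cast ne_of_gt this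
  have hone : (fun i => ((hg.1.eigenvalues i : ℂ) + t) * ((hg.1.eigenvalues i : ℂ) + t)⁻¹)
      = fun _ => (1:ℂ) := by
    funext i; exact mul_inv_cancel₀ (hne i)
  simp only [mul_assoc]
  rw [← mul_assoc (star U) U, hU2 hg, one_mul,
    ← mul_assoc (Matrix.diagonal _) (Matrix.diagonal _), Matrix.diagonal_mul_diagonal, hone,
    Matrix.diagonal_one, one_mul, hU1 hg]

lemma cpow_decomp (z : ℂ) :
    _root_.cpow g z = (hg.1.eigenvectorUnitary : Matrix n n ℂ) *
      Matrix.diagonal (fun i => (hg.1.eigenvalues i : ℂ) ^ z) *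
      star (hg.1.eigenvectorUnitary : Matrix n n ℂ) := by
  unfold _root_.cpow
  rw [dif_pos hg.1]

end spectral

end Aux

theorem Tcal_eq_beta_integral
    (g f : Matrix n n ℂ) (hg : g.PosDef) (hf : f.IsHermitian) :
    Tcal g f = ∫ t : ℝ, beta0 t •
      (cpow g ((-1 - (t : ℂ) * Complex.I) / 2) * f * cpow g ((-1 + (t : ℂ) * Complex.I) / 2)) := by
  classical
  set U := (hg.1.eigenvectorUnitary : Matrix n n ℂ) with hUdef
  set lam := hg.1.eigenvalues with hlamdef
  have hlam : ∀ i, 0 < lam i := hg.eigenvalues_pos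
  set F := star U * f * U with hFdef
  set cL : n → n → ℝ → ℂ := fun i j t => ((lam i:ℂ)+t)⁻¹ * ((lam j:ℂ)+t)⁻¹ * F i j with hcL
  set cR : n → n → ℝ → ℂ := fun i j t => (beta0 t : ℂ) *
    ((lam i:ℂ)^((-1 - (t:ℂ) * Complex.I)/2) * (lam j:ℂ)^((-1 + (t:ℂ) * Complex.I)/2)) * F i j
    with hcR
  have hLpt : ∀ t ∈ Set.Ioi (0:ℝ), (g + (t:ℂ) • 1)⁻¹ * f * (g + (t:ℂ) • 1)⁻¹
      = U * (Matrix.of fun i j => cL i j t) * star U := by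
    intro t ht
    rw [resolvent_decomp hg ht]
    have h1 : Matrix.of (fun i j => cL i j t)
        = Matrix.diagonal (fun i => ((lam i:ℂ)+t)⁻¹) * F *
          Matrix.diagonal (fun i => ((lam i:ℂ)+t)⁻¹) := by
      ext i j
      simp only [Matrix.of_apply, Matrix.mul_diagonal, Matrix.diagonal_mul, hcL]
      ring
    rw [h1, hFdef]
    simp only [mul_assoc]
    rfl
  have hRpt : ∀ t : ℝ, beta0 t • (cpow g ((-1 - (t:ℂ) * Complex.I)/2) * f *
        cpow g ((-1 + (t:ℂ) * Complex.I)/2))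
      = U * (Matrix.of fun i j => cR i j t) * star U := by
    intro t
    rw [cpow_decomp hg, cpow_decomp hg]
    have h1 : Matrix.of (fun i j => cR i j t)
        = beta0 t • (Matrix.diagonal (fun i => (lam i:ℂ)^((-1 - (t:ℂ) * Complex.I)/2)) * F *
            Matrix.diagonal (fun i => (lam i:ℂ)^((-1 + (t:ℂ) * Complex.I)/2))) := by
      ext i j
      simp only [Matrix.of_apply, Matrix.smul_apply, Matrix.mul_diagonal, Matrix.diagonal_mul,
        hcR, Complex.real_smul]
      ring
    rw [h1, Matrix.mul_smul, Matrix.smul_mul, hFdef]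
    congr 1
    simp only [mul_assoc]
    rfl
  have hintL : ∀ i j, Integrable (cL i j) (MeasureTheory.volume.restrict (Set.Ioi (0:ℝ))) :=
    fun i j => (entry_int_left (hlam i) (hlam j)).mul_const (F i j)
  have hintR : ∀ i j, Integrable (cR i j) MeasureTheory.volume :=
    fun i j => (entry_int_right (hlam i) (hlam j)).mul_const (F i j)
  have hXY : (Matrix.of fun i j => ∫ t in Set.Ioi (0:ℝ), cL i j t)
      = (Matrix.of fun i j => ∫ t : ℝ, cR i j t) := by
    ext i j
    simp only [Matrix.of_apply, hcL, hcR]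
    rw [MeasureTheory.integral_mul_const, MeasureTheory.integral_mul_const]
    congr 1
    exact entry_key (hlam i) (hlam j)
  unfold Tcal
  rw [MeasureTheory.setIntegral_congr_fun measurableSet_Ioi hLpt,
    integral_conj_mat U (star U) cL hintL, hXY, ← integral_conj_mat U (star U) cR hintR]
  congr 1
  funext t
  exact (hRpt t).symm
end

section
/- Step 1 of quasi-factorization: for bipartite density operators ρ_AB, σ_AB with full-rank σ_AB, D(ρ_AB‖σ_AB) ≥ D(ρ_A‖σ_A) + D(ρ_B‖σ_B) − log Tr[M], where M = exp(log σ_AB − log(σ_A⊗σ_B) + log(ρ_A⊗ρ_B)). Moreover if σ_AB = σ_A⊗σ_B then log Tr[M] = 0. -/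
open Matrix Kronecker MeasureTheory
open scoped BigOperators ComplexOrder

attribute [local instance] Matrix.frobeniusNormedAddCommGroup Matrix.frobeniusNormedSpace

variable {n : Type*} [Fintype n] [DecidableEq n]

variable {A B : Type*} [Fintype A] [DecidableEq A] [Fintype B] [DecidableEq B]

section AuxQF
open Polynomial


lemma aeval_UDU (U : Matrix n n ℂ) (hU : U ∈ Matrix.unitaryGroup n ℂ) (c : n → ℂ)
    (p : ℂ[X]) :
    aeval (U * diagonal c * star U) p = U * diagonal (fun i => p.eval (c i)) * star U := by
  have hU1 : U * star U = 1 := (Matrix.mem_unitaryGroup_iff).mp hU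
  have hU2 : star U * U = 1 := (Matrix.mem_unitaryGroup_iff').mp hU
  induction p using Polynomial.induction_on' with
  | add p q hp hq =>
      simp only [map_add, hp, hq, eval_add]
      rw [show (diagonal fun i => eval (c i) p + eval (c i) q)
          = (diagonal fun i => eval (c i) p) + (diagonal fun i => eval (c i) q) from
        (diagonal_add _ _).symm, Matrix.mul_add, Matrix.add_mul]
  | monomial k a =>
      have hpow : (U * diagonal c * star U) ^ k = U * diagonal (fun i => c i ^ k) * star U := by
        induction k with
        | zero => simp [hU1, diagonal_one]
        | succ m ih =>
            rw [pow_succ, ih, Matrix.mul_assoc, Matrix.mul_assoc, Matrix.mul_assoc,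
              ← Matrix.mul_assoc (star U) U, hU2, Matrix.one_mul,
              ← Matrix.mul_assoc (diagonal _) (diagonal c), diagonal_mul_diagonal,
              ← Matrix.mul_assoc]
            simp only [pow_succ]
      simp only [aeval_monomial, eval_monomial, hpow]
      rw [show (algebraMap ℂ (Matrix n n ℂ)) a = a • (1 : Matrix n n ℂ) by
        simp [Algebra.algebraMap_eq_smul_one]]
      rw [smul_one_mul, ← smul_mul_assoc, ← mul_smul_comm, ← diagonal_smul]
      congr

lemma isHermitian_UDU (U : Matrix n n ℂ) (hU : U ∈ Matrix.unitaryGroup n ℂ) (d : n → ℝ) :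
    (U * diagonal (fun i => (d i : ℂ)) * star U).IsHermitian := by
  have hd : (diagonal (fun i => (d i : ℂ))).conjTranspose = diagonal (fun i => (d i : ℂ)) := by
    rw [diagonal_conjTranspose,
      show (star fun i => ((d i : ℂ))) = fun i => ((d i : ℂ)) from
        funext fun i => Complex.conj_ofReal (d i)]
  unfold Matrix.IsHermitian
  rw [conjTranspose_mul, conjTranspose_mul, hd, star_eq_conjTranspose, conjTranspose_conjTranspose,
    Matrix.mul_assoc]

lemma funcCalc_eq (f : ℝ → ℂ) {M U : Matrix n n ℂ} (hU : U ∈ Matrix.unitaryGroup n ℂ)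
    {d : n → ℝ} (hM : M = U * diagonal (fun i => (d i : ℂ)) * star U) :
    funcCalc f M = U * diagonal (fun i => f (d i)) * star U := by
  have hherm : M.IsHermitian := hM ▸ isHermitian_UDU U hU d
  have hV : (hherm.eigenvectorUnitary : Matrix n n ℂ) ∈ Matrix.unitaryGroup n ℂ :=
    hherm.eigenvectorUnitary.2
  have hspec : M = (hherm.eigenvectorUnitary : Matrix n n ℂ)
      * diagonal (fun i => (hherm.eigenvalues i : ℂ))
      * star (hherm.eigenvectorUnitary : Matrix n n ℂ) := by
    convert hherm.spectral_theorem using 2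
    rw [Unitary.conjStarAlgAut_apply]; rfl
  set s : Finset ℝ := (Finset.univ.image d) ∪ (Finset.univ.image hherm.eigenvalues) with hs
  have hinj : Set.InjOn (fun x : ℝ => (x : ℂ)) s := fun a _ b _ h => Complex.ofReal_inj.mp h
  set p : ℂ[X] := Lagrange.interpolate s (fun x : ℝ => (x : ℂ)) f with hp
  have hkey : ∀ x ∈ s, p.eval (x : ℂ) = f x := fun x hx =>
    Lagrange.eval_interpolate_at_node _ hinj hx
  have h1 : aeval M p = U * diagonal (fun i => f (d i)) * star U := by
    rw [hM, aeval_UDU U hU]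
    congr 2
    exact congrArg diagonal (funext fun i => hkey (d i)
      (Finset.mem_union_left _ (Finset.mem_image_of_mem d (Finset.mem_univ i))))
  have h2 : aeval M p = (hherm.eigenvectorUnitary : Matrix n n ℂ)
      * diagonal (fun i => f (hherm.eigenvalues i))
      * star (hherm.eigenvectorUnitary : Matrix n n ℂ) := by
    conv_lhs => rw [hspec]
    rw [aeval_UDU _ hV]
    congr 2
    exact congrArg diagonal (funext fun i => hkey _
      (Finset.mem_union_right _ (Finset.mem_image_of_mem _ (Finset.mem_univ i))))
  rw [funcCalc, dif_pos hherm, ← h2, h1]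

lemma spectral_decomp {M : Matrix n n ℂ} (h : M.IsHermitian) :
    M = (h.eigenvectorUnitary : Matrix n n ℂ) * diagonal (fun i => (h.eigenvalues i : ℂ))
      * star (h.eigenvectorUnitary : Matrix n n ℂ) := by
  convert h.spectral_theorem using 2
  rw [Unitary.conjStarAlgAut_apply]; rfl

lemma trace_UDU (U : Matrix n n ℂ) (hU : U ∈ Matrix.unitaryGroup n ℂ) (c : n → ℂ) :
    (U * diagonal c * star U).trace = ∑ i, c i := by
  rw [Matrix.trace_mul_comm, ← Matrix.mul_assoc,
    (Matrix.mem_unitaryGroup_iff').mp hU, Matrix.one_mul, Matrix.trace_diagonal]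

lemma posDef_UDU (U : Matrix n n ℂ) (hU : U ∈ Matrix.unitaryGroup n ℂ) (d : n → ℝ)
    (hd : ∀ i, 0 < d i) : (U * diagonal (fun i => (d i : ℂ)) * star U).PosDef := by
  have hU1 : U * star U = 1 := (Matrix.mem_unitaryGroup_iff).mp hU
  have hD : (diagonal (fun i => (d i : ℂ))).PosDef :=
    Matrix.posDef_diagonal_iff.mpr fun i => by exact_mod_cast hd i
  refine Matrix.PosDef.of_dotProduct_mulVec_pos (isHermitian_UDU U hU d) fun x hx => ?_
  have hyne : star U *ᵥ x ≠ 0 := by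
    intro h
    apply hx
    have : U *ᵥ (star U *ᵥ x) = x := by rw [mulVec_mulVec, hU1, one_mulVec]
    rw [h, mulVec_zero] at this
    exact this.symm
  have key : star x ⬝ᵥ ((U * diagonal (fun i => (d i : ℂ)) * star U) *ᵥ x)
      = star (star U *ᵥ x) ⬝ᵥ (diagonal (fun i => (d i : ℂ)) *ᵥ (star U *ᵥ x)) := by
    rw [Matrix.mul_assoc, ← mulVec_mulVec, dotProduct_mulVec, ← mulVec_mulVec,
      star_mulVec, star_eq_conjTranspose, conjTranspose_conjTranspose]
  rw [key]
  exact hD.dotProduct_mulVec_pos hyne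

lemma posSemidef_UDU (U : Matrix n n ℂ) (hU : U ∈ Matrix.unitaryGroup n ℂ) (d : n → ℝ)
    (hd : ∀ i, 0 ≤ d i) : (U * diagonal (fun i => (d i : ℂ)) * star U).PosSemidef := by
  have hD : (diagonal (fun i => (d i : ℂ))).PosSemidef :=
    Matrix.posSemidef_diagonal_iff.mpr fun i => by exact_mod_cast hd i
  simpa [star_eq_conjTranspose] using hD.mul_mul_conjTranspose_same U



lemma mexp_decomp {H U : Matrix n n ℂ} (hU : U ∈ Matrix.unitaryGroup n ℂ) {d : n → ℝ}
    (hH : H = U * diagonal (fun i => (d i : ℂ)) * star U) :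
    mexp H = U * diagonal (fun i => ((Real.exp (d i) : ℝ) : ℂ)) * star U :=
  funcCalc_eq _ hU hH

lemma mlog_decomp {H U : Matrix n n ℂ} (hU : U ∈ Matrix.unitaryGroup n ℂ) {d : n → ℝ}
    (hH : H = U * diagonal (fun i => (d i : ℂ)) * star U) :
    mlog H = U * diagonal (fun i => ((Real.log (d i) : ℝ) : ℂ)) * star U :=
  funcCalc_eq _ hU hH

lemma mlog_isHermitian {M : Matrix n n ℂ} (h : M.IsHermitian) : (mlog M).IsHermitian := by
  rw [mlog_decomp h.eigenvectorUnitary.2 (spectral_decomp h)]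
  exact isHermitian_UDU _ h.eigenvectorUnitary.2 _

lemma mexp_log {M : Matrix n n ℂ} (h : M.PosDef) : mexp (mlog M) = M := by
  have hU := h.1.eigenvectorUnitary.2
  rw [mexp_decomp hU (mlog_decomp hU (spectral_decomp h.1))]
  rw [show (fun i => ((Real.exp (Real.log (h.1.eigenvalues i)) : ℝ) : ℂ))
      = fun i => ((h.1.eigenvalues i : ℝ) : ℂ) from
    funext fun i => by rw [Real.exp_log (h.eigenvalues_pos i)]]
  exact (spectral_decomp h.1).symm

lemma mlog_exp {H : Matrix n n ℂ} (h : H.IsHermitian) : mlog (mexp H) = H := by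
  have hU := h.eigenvectorUnitary.2
  rw [mlog_decomp hU (mexp_decomp hU (spectral_decomp h))]
  rw [show (fun i => ((Real.log (Real.exp (h.eigenvalues i)) : ℝ) : ℂ))
      = fun i => ((h.eigenvalues i : ℝ) : ℂ) from
    funext fun i => by rw [Real.log_exp]]
  exact (spectral_decomp h).symm

lemma mlog_smul {M : Matrix n n ℂ} (h : M.PosDef) {c : ℝ} (hc : 0 < c) :
    mlog ((c : ℂ) • M) = (Real.log c : ℂ) • (1 : Matrix n n ℂ) + mlog M := by
  have hU := h.1.eigenvectorUnitary.2
  have hU1 : (h.1.eigenvectorUnitary : Matrix n n ℂ)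
      * star (h.1.eigenvectorUnitary : Matrix n n ℂ) = 1 :=
    (Matrix.mem_unitaryGroup_iff).mp hU
  have hdec : (c : ℂ) • M = (h.1.eigenvectorUnitary : Matrix n n ℂ)
      * diagonal (fun i => ((c * h.1.eigenvalues i : ℝ) : ℂ))
      * star (h.1.eigenvectorUnitary : Matrix n n ℂ) := by
    conv_lhs => rw [spectral_decomp h.1]
    rw [← smul_mul_assoc, ← mul_smul_comm, ← diagonal_smul]
    congr 2
    exact congrArg diagonal (funext fun i => by
      show (c : ℂ) * _ = _
      push_cast
      rfl)
  rw [mlog_decomp hU hdec,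
    show (fun i => ((Real.log (c * h.1.eigenvalues i) : ℝ) : ℂ))
      = fun i => (Real.log c : ℂ) + ((Real.log (h.1.eigenvalues i) : ℝ) : ℂ) from
    funext fun i => by
      rw [Real.log_mul hc.ne' (h.eigenvalues_pos i).ne']; push_cast; ring,
    show (diagonal fun i => (Real.log c : ℂ) + ((Real.log (h.1.eigenvalues i) : ℝ) : ℂ))
      = (Real.log c : ℂ) • (1 : Matrix n n ℂ)
        + diagonal (fun i => ((Real.log (h.1.eigenvalues i) : ℝ) : ℂ)) by
      ext i j
      by_cases hij : i = j <;>
        simp [Matrix.diagonal_apply, Matrix.one_apply, hij],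
    Matrix.mul_add, Matrix.add_mul, mlog_decomp hU (spectral_decomp h.1)]
  congr 1
  rw [mul_smul_comm, Matrix.mul_one, smul_mul_assoc, hU1]


lemma UDU_mul_UDU (U : Matrix n n ℂ) (hU : U ∈ Matrix.unitaryGroup n ℂ) (c d : n → ℂ) :
    (U * diagonal c * star U) * (U * diagonal d * star U)
      = U * diagonal (fun i => c i * d i) * star U := by
  have hU2 : star U * U = 1 := (Matrix.mem_unitaryGroup_iff').mp hU
  have hcancel : ∀ X : Matrix n n ℂ, star U * (U * X) = X := fun X => by
    rw [← Matrix.mul_assoc, hU2, Matrix.one_mul]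
  simp only [Matrix.mul_assoc, hcancel]
  rw [← Matrix.mul_assoc (diagonal c) (diagonal d), diagonal_mul_diagonal]

lemma trace_conj (U : Matrix n n ℂ) (hU : U ∈ Matrix.unitaryGroup n ℂ) (X : Matrix n n ℂ) :
    (U * X * star U).trace = X.trace := by
  rw [Matrix.trace_mul_comm, ← Matrix.mul_assoc, (Matrix.mem_unitaryGroup_iff').mp hU,
    Matrix.one_mul]

lemma trace_UDU_VDV (U V : Matrix n n ℂ) (hU : U ∈ Matrix.unitaryGroup n ℂ)
    (hV : V ∈ Matrix.unitaryGroup n ℂ) (c d : n → ℝ) :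
    ((U * diagonal (fun i => (c i : ℂ)) * star U)
        * (V * diagonal (fun i => (d i : ℂ)) * star V)).trace
      = ((∑ i, ∑ j, c i * d j * Complex.normSq ((star U * V) i j) : ℝ) : ℂ) := by
  have hUU : U * star U = 1 := (Matrix.mem_unitaryGroup_iff).mp hU
  set W := star U * V with hW
  set Dc := diagonal (fun i => (c i : ℂ))
  set Dd := diagonal (fun i => (d i : ℂ))
  have key : (U * Dc * star U) * (V * Dd * star V)
      = U * (Dc * (W * (Dd * star W))) * star U := by
    rw [hW, show star (star U * V) = star V * U by rw [Matrix.star_mul, star_star]]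
    simp only [Matrix.mul_assoc]
    rw [hUU, Matrix.mul_one]
  rw [key, trace_conj U hU]
  simp only [Matrix.trace, Matrix.diag, Matrix.mul_apply, Dc, Dd, Matrix.diagonal_apply,
    ite_mul, zero_mul, mul_ite, mul_zero, Finset.sum_ite_irrel, Finset.sum_const_zero,
    Finset.sum_ite_eq, Finset.sum_ite_eq', Finset.mem_univ, if_true, Matrix.star_apply,
    Finset.mul_sum, Finset.sum_mul]
  push_cast
  refine Finset.sum_congr rfl fun i _ => Finset.sum_congr rfl fun j _ => ?_
  rw [show star (W i j) = (starRingEnd ℂ) (W i j) from rfl, ← Complex.mul_conj]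
  ring

lemma unitary_row_sum {W : Matrix n n ℂ} (hW : W ∈ Matrix.unitaryGroup n ℂ) (i : n) :
    ∑ j, Complex.normSq (W i j) = 1 := by
  have h := congr_fun (congr_fun ((Matrix.mem_unitaryGroup_iff).mp hW) i) i
  rw [Matrix.mul_apply, Matrix.one_apply_eq] at h
  have : ((∑ j, Complex.normSq (W i j) : ℝ) : ℂ) = 1 := by
    rw [← h]
    push_cast
    exact Finset.sum_congr rfl fun j _ => by
      rw [show (star W) j i = (starRingEnd ℂ) (W i j) from rfl, Complex.mul_conj]
  exact_mod_cast this

lemma unitary_col_sum {W : Matrix n n ℂ} (hW : W ∈ Matrix.unitaryGroup n ℂ) (j : n) :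
    ∑ i, Complex.normSq (W i j) = 1 := by
  have h := congr_fun (congr_fun ((Matrix.mem_unitaryGroup_iff').mp hW) j) j
  rw [Matrix.mul_apply, Matrix.one_apply_eq] at h
  have : ((∑ i, Complex.normSq (W i j) : ℝ) : ℂ) = 1 := by
    rw [← h]
    push_cast
    exact Finset.sum_congr rfl fun i _ => by
      rw [show (star W) j i = (starRingEnd ℂ) (W i j) from rfl, mul_comm, Complex.mul_conj]
  exact_mod_cast this

lemma klein_scalar {a b : ℝ} (ha : 0 ≤ a) (hb : 0 < b) :
    a - b ≤ a * Real.log a - a * Real.log b := by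
  rcases eq_or_lt_of_le ha with h | h
  · simp [← h]
    linarith
  · have hlog := Real.log_le_sub_one_of_pos (show (0:ℝ) < b / a from div_pos hb h)
    rw [Real.log_div hb.ne' h.ne'] at hlog
    have h2 := mul_le_mul_of_nonneg_left hlog h.le
    have hba : a * (b / a - 1) = b - a := by field_simp
    nlinarith



lemma trace_posdef_real {M : Matrix n n ℂ} (h : M.IsHermitian) :
    M.trace = ((∑ i, h.eigenvalues i : ℝ) : ℂ) := by
  conv_lhs => rw [spectral_decomp h]
  rw [trace_UDU _ h.eigenvectorUnitary.2]
  push_cast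
  rfl

lemma klein {ρ τ : Matrix n n ℂ} (hρ : ρ.PosSemidef) (hτ : τ.PosDef)
    (hρ1 : ρ.trace = 1) (hτ1 : τ.trace = 1) :
    0 ≤ ((ρ * (mlog ρ - mlog τ)).trace).re := by
  set p : n → ℝ := hρ.1.eigenvalues with hp
  set q : n → ℝ := hτ.1.eigenvalues with hq
  set U : Matrix n n ℂ := (hρ.1.eigenvectorUnitary : Matrix n n ℂ) with hUdef
  set V : Matrix n n ℂ := (hτ.1.eigenvectorUnitary : Matrix n n ℂ) with hVdef
  have hU : U ∈ Matrix.unitaryGroup n ℂ := hρ.1.eigenvectorUnitary.2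
  have hV : V ∈ Matrix.unitaryGroup n ℂ := hτ.1.eigenvectorUnitary.2
  set W : Matrix n n ℂ := star U * V with hWdef
  have hW : W ∈ Matrix.unitaryGroup n ℂ := by
    rw [Matrix.mem_unitaryGroup_iff', hWdef, Matrix.star_mul, star_star]
    rw [Matrix.mul_assoc, ← Matrix.mul_assoc U, (Matrix.mem_unitaryGroup_iff).mp hU,
      Matrix.one_mul, (Matrix.mem_unitaryGroup_iff').mp hV]
  set w : n → n → ℝ := fun i j => Complex.normSq (W i j) with hwdef
  have hρdec : ρ = U * diagonal (fun i => (p i : ℂ)) * star U := spectral_decomp hρ.1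
  have hτdec : τ = V * diagonal (fun i => (q i : ℂ)) * star V := spectral_decomp hτ.1
  have hp0 : ∀ i, 0 ≤ p i := fun i => hρ.eigenvalues_nonneg i
  have hq0 : ∀ j, 0 < q j := fun j => hτ.eigenvalues_pos j
  have hp1 : ∑ i, p i = 1 := by
    have := hρ1
    rw [trace_posdef_real hρ.1] at this
    exact_mod_cast this
  have hq1 : ∑ j, q j = 1 := by
    have := hτ1
    rw [trace_posdef_real hτ.1] at this
    exact_mod_cast this
  have term1 : (ρ * mlog ρ).trace = ((∑ i, p i * Real.log (p i) : ℝ) : ℂ) := by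
    rw [mlog_decomp hU hρdec]
    conv_lhs => rw [hρdec]
    rw [UDU_mul_UDU U hU, trace_UDU U hU]
    push_cast
    rfl
  have term2 : (ρ * mlog τ).trace
      = ((∑ i, ∑ j, p i * Real.log (q j) * w i j : ℝ) : ℂ) := by
    rw [mlog_decomp hV hτdec]
    conv_lhs => rw [hρdec]
    exact trace_UDU_VDV U V hU hV p (fun j => Real.log (q j))
  rw [Matrix.mul_sub, Matrix.trace_sub, Complex.sub_re, term1, term2,
    Complex.ofReal_re, Complex.ofReal_re, sub_nonneg]
  have hrow : ∀ i, ∑ j, w i j = 1 := fun i => unitary_row_sum hW i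
  have hcol : ∀ j, ∑ i, w i j = 1 := fun j => unitary_col_sum hW j
  have key1 : ∑ i, p i * Real.log (p i) = ∑ i, ∑ j, w i j * (p i * Real.log (p i)) := by
    refine Finset.sum_congr rfl fun i _ => ?_
    rw [← Finset.sum_mul, hrow i, one_mul]
  calc ∑ i, ∑ j, p i * Real.log (q j) * w i j
      = ∑ i, ∑ j, w i j * (p i * Real.log (q j)) := by
        exact Finset.sum_congr rfl fun i _ => Finset.sum_congr rfl fun j _ => by ring
    _ ≤ ∑ i, ∑ j, w i j * (p i * Real.log (p i)) - ∑ i, ∑ j, w i j * (p i - q j) := by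
        rw [← Finset.sum_sub_distrib]
        refine Finset.sum_le_sum fun i _ => ?_
        rw [← Finset.sum_sub_distrib]
        refine Finset.sum_le_sum fun j _ => ?_
        have hkl := klein_scalar (hp0 i) (hq0 j)
        have hwnn : 0 ≤ w i j := Complex.normSq_nonneg _
        nlinarith [mul_le_mul_of_nonneg_left hkl hwnn]
    _ = ∑ i, ∑ j, w i j * (p i * Real.log (p i)) := by
        have : ∑ i, ∑ j, w i j * (p i - q j) = 0 := by
          have e1 : ∑ i, ∑ j, w i j * p i = 1 := by
            rw [show ∑ i, ∑ j, w i j * p i = ∑ i, (∑ j, w i j) * p i from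
              Finset.sum_congr rfl fun i _ => by rw [Finset.sum_mul]]
            simp only [hrow, one_mul, hp1]
          have e2 : ∑ i, ∑ j, w i j * q j = 1 := by
            rw [Finset.sum_comm]
            rw [show ∑ j, ∑ i, w i j * q j = ∑ j, (∑ i, w i j) * q j from
              Finset.sum_congr rfl fun j _ => by rw [Finset.sum_mul]]
            simp only [hcol, one_mul, hq1]
          simp only [mul_sub, Finset.sum_sub_distrib, e1, e2, sub_self]
        rw [this, sub_zero]
    _ = ∑ i, p i * Real.log (p i) := key1.symm



lemma posDef_smul {M : Matrix n n ℂ} (h : M.PosDef) {c : ℝ} (hc : 0 < c) :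
    (((c : ℂ)) • M).PosDef := by
  refine Matrix.PosDef.of_dotProduct_mulVec_pos ?_ fun x hx => ?_
  · unfold Matrix.IsHermitian
    rw [conjTranspose_smul, h.1.eq, Complex.star_def, Complex.conj_ofReal]
  · rw [smul_mulVec, dotProduct_smul, smul_eq_mul]
    exact mul_pos (by exact_mod_cast hc) (h.dotProduct_mulVec_pos hx)

lemma relEnt_ge_neg_log {ρ M : Matrix n n ℂ} (hρ : ρ.PosSemidef) (hρ1 : ρ.trace = 1)
    (hM : M.PosDef) :
    - Real.log ((M.trace).re) ≤ ((ρ * (mlog ρ - mlog M)).trace).re := by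
  have hn : Nonempty n := by
    rcases isEmpty_or_nonempty n with h | h
    · exfalso
      have := hρ1
      simp [Matrix.trace] at this
    · exact h
  set t : ℝ := (M.trace).re with ht
  have htr : M.trace = ((∑ i, hM.1.eigenvalues i : ℝ) : ℂ) := trace_posdef_real hM.1
  have ht_pos : 0 < t := by
    rw [ht, htr, Complex.ofReal_re]
    exact Finset.sum_pos (fun i _ => hM.eigenvalues_pos i) Finset.univ_nonempty
  have htC : M.trace = (t : ℂ) := by rw [ht, htr]; simp
  set τ : Matrix n n ℂ := ((t⁻¹ : ℝ) : ℂ) • M with hτdef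
  have hτpd : τ.PosDef := posDef_smul hM (inv_pos.mpr ht_pos)
  have hτ1 : τ.trace = 1 := by
    rw [hτdef, Matrix.trace_smul, htC, smul_eq_mul]
    push_cast
    field_simp
  have hlogτ : mlog τ = ((Real.log t⁻¹ : ℝ) : ℂ) • (1 : Matrix n n ℂ) + mlog M :=
    mlog_smul hM (inv_pos.mpr ht_pos)
  have hK := klein hρ hτpd hρ1 hτ1
  have hexp : ρ * (mlog ρ - mlog τ)
      = ρ * (mlog ρ - mlog M) - ((Real.log t⁻¹ : ℝ) : ℂ) • ρ := by
    rw [hlogτ, show mlog ρ - (((Real.log t⁻¹ : ℝ) : ℂ) • (1 : Matrix n n ℂ) + mlog M)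
        = (mlog ρ - mlog M) - ((Real.log t⁻¹ : ℝ) : ℂ) • (1 : Matrix n n ℂ) by abel,
      Matrix.mul_sub, Matrix.mul_smul, Matrix.mul_one]
  rw [hexp, Matrix.trace_sub, Matrix.trace_smul, hρ1, smul_eq_mul, mul_one,
    Complex.sub_re, Complex.ofReal_re, Real.log_inv] at hK
  linarith




lemma star_kron (P : Matrix A A ℂ) (Q : Matrix B B ℂ) :
    star (P ⊗ₖ Q) = star P ⊗ₖ star Q := by
  ext ⟨i, j⟩ ⟨k, l⟩
  simp [Matrix.star_apply, Matrix.kroneckerMap_apply, star_mul']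

lemma kron_unitary {U : Matrix A A ℂ} {V : Matrix B B ℂ}
    (hU : U ∈ Matrix.unitaryGroup A ℂ) (hV : V ∈ Matrix.unitaryGroup B ℂ) :
    U ⊗ₖ V ∈ Matrix.unitaryGroup (A × B) ℂ := by
  rw [Matrix.mem_unitaryGroup_iff, star_kron, ← Matrix.mul_kronecker_mul,
    (Matrix.mem_unitaryGroup_iff).mp hU, (Matrix.mem_unitaryGroup_iff).mp hV,
    Matrix.one_kronecker_one]

lemma kron_decomp {P U : Matrix A A ℂ} {Q V : Matrix B B ℂ} {a : A → ℝ} {b : B → ℝ}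
    (hP : P = U * diagonal (fun i => (a i : ℂ)) * star U)
    (hQ : Q = V * diagonal (fun i => (b i : ℂ)) * star V) :
    P ⊗ₖ Q = (U ⊗ₖ V) * diagonal (fun p : A × B => ((a p.1 * b p.2 : ℝ) : ℂ))
      * star (U ⊗ₖ V) := by
  rw [hP, hQ, Matrix.mul_kronecker_mul, Matrix.mul_kronecker_mul, star_kron,
    Matrix.diagonal_kronecker_diagonal]
  congr 2
  exact congrArg diagonal (funext fun p => by push_cast; ring)

lemma posDef_kron {P : Matrix A A ℂ} {Q : Matrix B B ℂ} (hP : P.PosDef) (hQ : Q.PosDef) :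
    (P ⊗ₖ Q).PosDef := by
  rw [kron_decomp (spectral_decomp hP.1) (spectral_decomp hQ.1)]
  exact posDef_UDU _ (kron_unitary hP.1.eigenvectorUnitary.2 hQ.1.eigenvectorUnitary.2) _
    fun p => mul_pos (hP.eigenvalues_pos p.1) (hQ.eigenvalues_pos p.2)

lemma mlog_kron {P : Matrix A A ℂ} {Q : Matrix B B ℂ} (hP : P.PosDef) (hQ : Q.PosDef) :
    mlog (P ⊗ₖ Q) = (mlog P) ⊗ₖ (1 : Matrix B B ℂ) + (1 : Matrix A A ℂ) ⊗ₖ (mlog Q) := by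
  have hU := hP.1.eigenvectorUnitary.2
  have hV := hQ.1.eigenvectorUnitary.2
  set U := (hP.1.eigenvectorUnitary : Matrix A A ℂ)
  set V := (hQ.1.eigenvectorUnitary : Matrix B B ℂ)
  have hV1 : V * star V = 1 := (Matrix.mem_unitaryGroup_iff).mp hV
  have hU1 : U * star U = 1 := (Matrix.mem_unitaryGroup_iff).mp hU
  rw [mlog_decomp (kron_unitary hU hV) (kron_decomp (spectral_decomp hP.1) (spectral_decomp hQ.1))]
  have hsplit : (diagonal fun p : A × B =>
        ((Real.log (hP.1.eigenvalues p.1 * hQ.1.eigenvalues p.2) : ℝ) : ℂ))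
      = (diagonal fun i => (Real.log (hP.1.eigenvalues i) : ℂ)) ⊗ₖ (1 : Matrix B B ℂ)
        + (1 : Matrix A A ℂ) ⊗ₖ (diagonal fun i => (Real.log (hQ.1.eigenvalues i) : ℂ)) := by
    rw [show (1 : Matrix B B ℂ) = diagonal (fun _ => 1) from (diagonal_one).symm,
      show (1 : Matrix A A ℂ) = diagonal (fun _ => 1) from (diagonal_one).symm,
      Matrix.diagonal_kronecker_diagonal, Matrix.diagonal_kronecker_diagonal, diagonal_add]
    exact congrArg diagonal (funext fun p => by
      rw [Real.log_mul (hP.eigenvalues_pos p.1).ne' (hQ.eigenvalues_pos p.2).ne']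
      push_cast
      ring)
  rw [hsplit, Matrix.mul_add, Matrix.add_mul, star_kron]
  simp only [← Matrix.mul_kronecker_mul]
  rw [Matrix.mul_one, Matrix.mul_one, hV1, hU1,
    ← mlog_decomp hU (spectral_decomp hP.1), ← mlog_decomp hV (spectral_decomp hQ.1)]


lemma trace_mul_kron_one (ρ : Matrix (A × B) (A × B) ℂ) (X : Matrix A A ℂ) :
    (ρ * (X ⊗ₖ (1 : Matrix B B ℂ))).trace = ((ptraceB ρ) * X).trace := by
  simp only [Matrix.trace, Matrix.diag, Matrix.mul_apply, ptraceB, Matrix.of_apply,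
    Matrix.kroneckerMap_apply, Matrix.one_apply, Fintype.sum_prod_type, mul_ite, mul_one,
    mul_zero, Finset.sum_ite_eq, Finset.sum_ite_eq', Finset.mem_univ, if_true, Finset.sum_mul]
  exact Finset.sum_congr rfl fun a _ => Finset.sum_comm

lemma trace_mul_one_kron (ρ : Matrix (A × B) (A × B) ℂ) (Y : Matrix B B ℂ) :
    (ρ * ((1 : Matrix A A ℂ) ⊗ₖ Y)).trace = ((ptraceA ρ) * Y).trace := by
  simp only [Matrix.trace, Matrix.diag, Matrix.mul_apply, ptraceA, Matrix.of_apply,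
    Matrix.kroneckerMap_apply, Matrix.one_apply, Fintype.sum_prod_type, ite_mul, one_mul,
    zero_mul, mul_ite, mul_zero, Finset.sum_ite_eq, Finset.sum_ite_eq', Finset.mem_univ,
    if_true, Finset.sum_mul]
  have hcoll : ∀ (a : A) (b : B),
      (∑ x_2 : A, ∑ x_3 : B, if x_2 = a then ρ (a, b) (x_2, x_3) * Y x_3 b else 0)
      = ∑ x_3 : B, ρ (a, b) (a, x_3) * Y x_3 b := by
    intro a b
    rw [Finset.sum_comm]
    simp
  simp only [hcoll]
  rw [Finset.sum_comm]
  exact Finset.sum_congr rfl fun b _ => Finset.sum_comm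

lemma trace_ptraceB (ρ : Matrix (A × B) (A × B) ℂ) : (ptraceB ρ).trace = ρ.trace := by
  simp [Matrix.trace, Matrix.diag, ptraceB, Fintype.sum_prod_type]

lemma trace_ptraceA (ρ : Matrix (A × B) (A × B) ℂ) : (ptraceA ρ).trace = ρ.trace := by
  rw [Matrix.trace, Matrix.trace, Fintype.sum_prod_type, Finset.sum_comm]
  simp [Matrix.diag, ptraceA]

lemma ptraceB_hermitian {σ : Matrix (A × B) (A × B) ℂ} (h : σ.IsHermitian) :
    (ptraceB σ).IsHermitian := by
  ext a a'
  simp only [conjTranspose_apply, ptraceB, Matrix.of_apply, star_sum]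
  refine Finset.sum_congr rfl fun b _ => ?_
  rw [show star (σ (a', b) (a, b)) = σᴴ (a, b) (a', b) from rfl, h]

lemma ptraceA_hermitian {σ : Matrix (A × B) (A × B) ℂ} (h : σ.IsHermitian) :
    (ptraceA σ).IsHermitian := by
  ext b b'
  simp only [conjTranspose_apply, ptraceA, Matrix.of_apply, star_sum]
  refine Finset.sum_congr rfl fun a _ => ?_
  rw [show star (σ (a, b') (a, b)) = σᴴ (a, b) (a, b') from rfl, h]

lemma ptraceB_posDef [Nonempty B] {σ : Matrix (A × B) (A × B) ℂ} (h : σ.PosDef) :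
    (ptraceB σ).PosDef := by
  refine Matrix.PosDef.of_dotProduct_mulVec_pos (ptraceB_hermitian h.1) fun x hx => ?_
  classical
  set v : B → ((A × B) → ℂ) := fun b p => if p.2 = b then x p.1 else 0 with hv
  have hkey : star x ⬝ᵥ (ptraceB σ *ᵥ x) = ∑ b, star (v b) ⬝ᵥ (σ *ᵥ v b) := by
    simp only [dotProduct, mulVec, ptraceB, Matrix.of_apply, Pi.star_apply, hv,
      Fintype.sum_prod_type, apply_ite, star_zero, ite_mul, mul_ite, mul_zero, zero_mul,
      Finset.sum_ite_eq, Finset.sum_ite_eq', Finset.mem_univ, if_true, Finset.sum_mul,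
      Finset.mul_sum, Finset.sum_ite_irrel, Finset.sum_const_zero]
    conv_rhs => rw [Finset.sum_comm]
    exact Finset.sum_congr rfl fun a _ => Finset.sum_comm
  rw [hkey]
  refine Finset.sum_pos (fun b _ => h.dotProduct_mulVec_pos ?_) Finset.univ_nonempty
  intro hvb
  obtain ⟨a, ha⟩ := Function.ne_iff.mp hx
  have := congr_fun hvb (a, b)
  simp [hv] at this
  exact ha this

lemma ptraceA_posDef [Nonempty A] {σ : Matrix (A × B) (A × B) ℂ} (h : σ.PosDef) :
    (ptraceA σ).PosDef := by
  refine Matrix.PosDef.of_dotProduct_mulVec_pos (ptraceA_hermitian h.1) fun x hx => ?_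
  classical
  set v : A → ((A × B) → ℂ) := fun a p => if p.1 = a then x p.2 else 0 with hv
  have hkey : star x ⬝ᵥ (ptraceA σ *ᵥ x) = ∑ a, star (v a) ⬝ᵥ (σ *ᵥ v a) := by
    simp only [dotProduct, mulVec, ptraceA, Matrix.of_apply, Pi.star_apply, hv,
      Fintype.sum_prod_type, apply_ite, star_zero, ite_mul, mul_ite, mul_zero, zero_mul,
      Finset.sum_ite_eq, Finset.sum_ite_eq', Finset.mem_univ, if_true, Finset.sum_mul,
      Finset.mul_sum, Finset.sum_ite_irrel, Finset.sum_const_zero]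
    conv_rhs => rw [Finset.sum_comm]
    refine Finset.sum_congr rfl fun b _ => ?_
    conv_rhs => rw [Finset.sum_comm]
  rw [hkey]
  refine Finset.sum_pos (fun a _ => h.dotProduct_mulVec_pos ?_) Finset.univ_nonempty
  intro hva
  obtain ⟨b, hb⟩ := Function.ne_iff.mp hx
  have := congr_fun hva (a, b)
  simp [hv] at this
  exact hb this


end AuxQF

theorem quasi_factorization_step1
    (ρ σ : Matrix (A × B) (A × B) ℂ) (hρ : IsDensity ρ) (hσ : IsDensity σ)
    (hσpd : σ.PosDef) (hρA : (ptraceB ρ).PosDef) (hρB : (ptraceA ρ).PosDef) :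
    relEnt ρ σ ≥ relEnt (ptraceB ρ) (ptraceB σ) + relEnt (ptraceA ρ) (ptraceA σ)
        - Real.log (((mexp (mlog σ - mlog (ptraceB σ ⊗ₖ ptraceA σ)
            + mlog (ptraceB ρ ⊗ₖ ptraceA ρ))).trace).re) ∧
      (σ = ptraceB σ ⊗ₖ ptraceA σ →
        Real.log (((mexp (mlog σ - mlog (ptraceB σ ⊗ₖ ptraceA σ)
            + mlog (ptraceB ρ ⊗ₖ ptraceA ρ))).trace).re) = 0) := by
  classical
  have hne : Nonempty (A × B) := by
    rcases isEmpty_or_nonempty (A × B) with h | h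
    · exfalso
      have := hρ.2
      simp [Matrix.trace] at this
    · exact h
  have hA : Nonempty A := ⟨hne.some.1⟩
  have hB : Nonempty B := ⟨hne.some.2⟩
  have hσA : (ptraceB σ).PosDef := ptraceB_posDef hσpd
  have hσB : (ptraceA σ).PosDef := ptraceA_posDef hσpd
  have hρA1 : (ptraceB ρ).trace = 1 := by rw [trace_ptraceB, hρ.2]
  have hρB1 : (ptraceA ρ).trace = 1 := by rw [trace_ptraceA, hρ.2]
  set H : Matrix (A × B) (A × B) ℂ := mlog σ - mlog (ptraceB σ ⊗ₖ ptraceA σ)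
      + mlog (ptraceB ρ ⊗ₖ ptraceA ρ) with hHdef
  have hσABpd : (ptraceB σ ⊗ₖ ptraceA σ).PosDef := posDef_kron hσA hσB
  have hρABpd : (ptraceB ρ ⊗ₖ ptraceA ρ).PosDef := posDef_kron hρA hρB
  have hHherm : H.IsHermitian :=
    ((mlog_isHermitian hσpd.1).sub (mlog_isHermitian hσABpd.1)).add
      (mlog_isHermitian hρABpd.1)
  have hMdec := mexp_decomp hHherm.eigenvectorUnitary.2 (spectral_decomp hHherm)
  have hMpd : (mexp H).PosDef := by
    rw [hMdec]
    exact posDef_UDU _ hHherm.eigenvectorUnitary.2 _ fun i => Real.exp_pos _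
  have hlogM : mlog (mexp H) = H := mlog_exp hHherm
  have e1 : (ρ * mlog (ptraceB σ ⊗ₖ ptraceA σ)).trace
      = ((ptraceB ρ) * mlog (ptraceB σ)).trace + ((ptraceA ρ) * mlog (ptraceA σ)).trace := by
    rw [mlog_kron hσA hσB, Matrix.mul_add, Matrix.trace_add, trace_mul_kron_one,
      trace_mul_one_kron]
  have e2 : (ρ * mlog (ptraceB ρ ⊗ₖ ptraceA ρ)).trace
      = ((ptraceB ρ) * mlog (ptraceB ρ)).trace + ((ptraceA ρ) * mlog (ptraceA ρ)).trace := by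
    rw [mlog_kron hρA hρB, Matrix.mul_add, Matrix.trace_add, trace_mul_kron_one,
      trace_mul_one_kron]
  have main : (ρ * (mlog ρ - mlog (mexp H))).trace
      = (ρ * (mlog ρ - mlog σ)).trace
        - (((ptraceB ρ) * (mlog (ptraceB ρ) - mlog (ptraceB σ))).trace
          + ((ptraceA ρ) * (mlog (ptraceA ρ) - mlog (ptraceA σ))).trace) := by
    rw [hlogM, hHdef]
    simp only [Matrix.mul_sub, Matrix.mul_add, Matrix.trace_sub, Matrix.trace_add, e1, e2]
    ring
  have hbound := relEnt_ge_neg_log hρ.1 hρ.2 hMpd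
  rw [main] at hbound
  constructor
  · simp only [relEnt, ge_iff_le]
    simp only [Complex.sub_re, Complex.add_re] at hbound
    linarith
  · intro heq
    have h0 : mlog σ - mlog (ptraceB σ ⊗ₖ ptraceA σ) = 0 := by
      rw [show mlog σ = mlog (ptraceB σ ⊗ₖ ptraceA σ) by conv_lhs => rw [heq]]
      exact sub_self _
    have : mexp H = ptraceB ρ ⊗ₖ ptraceA ρ := by
      rw [hHdef, h0, zero_add]
      exact mexp_log hρABpd
    rw [show mexp (mlog σ - mlog (ptraceB σ ⊗ₖ ptraceA σ) + mlog (ptraceB ρ ⊗ₖ ptraceA ρ))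
        = mexp H from rfl, this, Matrix.trace_kronecker, hρA1, hρB1, mul_one]
    simp [Real.log_one]
end
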